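/- For θ ∈ (0,π) and φ ∈ [0,π] with θ ≠ φ, the quaternionic matrix A = diag(e^{iθ}, e^{iφ}) is not strongly reversible in SL(2,ℍ): there is no matrix g ∈ SL(2,ℍ) with g² = I and gAg⁻¹ = A⁻¹. -/

import Mathlib

/-- The quaternion `cos θ + (sin θ) i`, i.e. `e^{iθ}` inside the quaternions. -/
noncomputable def eI (θ : ℝ) : Quaternion ℝ := ⟨Real.cos θ, Real.sin θ, 0, 0⟩

/-- The quaternion unit `j`. -/
def qj : Quaternion ℝ := ⟨0, 0, 1, 0⟩

/-- The standard complex embedding `Φ` of a 2×2 quaternionic matrix `A = A₁ + A₂ j`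
as the 4×4 complex block matrix `[[A₁, A₂], [-conj A₂, conj A₁]]`. -/
noncomputable def Phi (A : Matrix (Fin 2) (Fin 2) (Quaternion ℝ)) :
    Matrix (Fin 2 ⊕ Fin 2) (Fin 2 ⊕ Fin 2) ℂ :=
  Matrix.fromBlocks
    (A.map fun q => (⟨q.re, q.imI⟩ : ℂ))
    (A.map fun q => (⟨q.imJ, q.imK⟩ : ℂ))
    (-(A.map fun q => (⟨q.imJ, -q.imK⟩ : ℂ)))
    (A.map fun q => (⟨q.re, -q.imI⟩ : ℂ))

/-- The quaternionic determinant: the determinant of the complex embedding. -/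
noncomputable def detH (A : Matrix (Fin 2) (Fin 2) (Quaternion ℝ)) : ℂ := (Phi A).det


@[simp] lemma eI_re (θ : ℝ) : (eI θ).re = Real.cos θ := rfl
@[simp] lemma eI_imI (θ : ℝ) : (eI θ).imI = Real.sin θ := rfl
@[simp] lemma eI_imJ (θ : ℝ) : (eI θ).imJ = 0 := rfl
@[simp] lemma eI_imK (θ : ℝ) : (eI θ).imK = 0 := rfl

lemma rot_fixed {C S p q : ℝ} (h1 : C^2 + S^2 = 1) (hC : C < 1)
    (e1 : C*p - S*q = p) (e2 : S*p + C*q = q) : p = 0 ∧ q = 0 := by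
  have hp : ((1-C)^2 + S^2) * p = 0 := by linear_combination (C-1)*e1 + S*e2
  have hpos : (0:ℝ) < (1-C)^2 + S^2 := by nlinarith
  have hp0 : p = 0 := by
    rcases mul_eq_zero.1 hp with h | h
    · exact absurd h (ne_of_gt hpos)
    · exact h
  refine ⟨hp0, ?_⟩
  have : (C-1)*q = 0 := by rw [hp0] at e2; linarith
  rcases mul_eq_zero.1 this with h | h
  · linarith
  · exact h

set_option maxHeartbeats 1000000 in
/-- diag(e^{iθ}, e^{iφ}) with θ ∈ (0,π), φ ∈ [0,π], θ ≠ φ is not strongly reversible in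
SL(2,ℍ): no involution g in SL(2,ℍ) (so g⁻¹ = g) conjugates it to its inverse. -/
theorem not_strongly_reversible_diag (θ φ : ℝ)
    (hθ : θ ∈ Set.Ioo 0 Real.pi) (hφ : φ ∈ Set.Icc 0 Real.pi) (hne : θ ≠ φ) :
    ¬ ∃ g B : Matrix (Fin 2) (Fin 2) (Quaternion ℝ),
        detH g = 1 ∧ g * g = 1 ∧
        !![eI θ, 0; 0, eI φ] * B = 1 ∧ B * !![eI θ, 0; 0, eI φ] = 1 ∧
        g * !![eI θ, 0; 0, eI φ] * g = B := by
  obtain ⟨hθ0, hθπ⟩ := hθ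
  obtain ⟨hφ0, hφπ⟩ := hφ
  have hπ : (0:ℝ) < Real.pi := Real.pi_pos
  rintro ⟨g, B, -, hgg, hAB, hBA, hconj⟩
  set A := !![eI θ, 0; 0, eI φ] with hA
  -- A * g * A = g
  have h1 : g * A * g * A = 1 := by rw [hconj]; exact hBA
  have hAgA : A * g * A = g := by
    have h2 : g * (g * A * g * A) = g * 1 := congrArg (g * ·) h1
    calc A * g * A = g * g * A * g * A := by rw [hgg, one_mul]
    _ = g * (g * A * g * A) := by simp only [mul_assoc]
    _ = g := by rw [h2, mul_one]
  have e00 := congrFun (congrFun hAgA 0) 0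
  have e01 := congrFun (congrFun hAgA 0) 1
  simp [hA, Matrix.mul_apply, Matrix.vecMul, dotProduct, Fin.sum_univ_two] at e00 e01
  -- trig facts
  have hs1 : 0 < Real.sin θ := Real.sin_pos_of_pos_of_lt_pi hθ0 hθπ
  have pyth1 : Real.cos θ ^ 2 + Real.sin θ ^ 2 = 1 := by
    have := Real.sin_sq_add_cos_sq θ; linarith
  have pyth2 : Real.cos φ ^ 2 + Real.sin φ ^ 2 = 1 := by
    have := Real.sin_sq_add_cos_sq φ; linarith
  have hCsum : Real.cos (θ + φ) < 1 := by
    rcases lt_or_eq_of_le (Real.cos_le_one (θ + φ)) with h | h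
    · exact h
    · exfalso
      have := (Real.cos_eq_one_iff_of_lt_of_lt (by linarith) (by linarith)).1 h
      linarith
  have hCdiff : Real.cos (θ - φ) < 1 := by
    rcases lt_or_eq_of_le (Real.cos_le_one (θ - φ)) with h | h
    · exact h
    · exfalso
      have := (Real.cos_eq_one_iff_of_lt_of_lt (by linarith) (by linarith)).1 h
      have : θ = φ := by linarith
      exact hne this
  rw [Real.cos_add] at hCsum
  rw [Real.cos_sub] at hCdiff
  -- the (0,0) entry: eI θ * a * eI θ = a forces a.re = a.imI = 0
  have ra := congrArg QuaternionAlgebra.re e00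
  have ia := congrArg QuaternionAlgebra.imI e00
  simp [Quaternion.re_mul, Quaternion.imI_mul] at ra ia
  set a := g 0 0
  have h2θ : Real.cos θ * Real.cos θ - Real.sin θ * Real.sin θ < 1 := by nlinarith
  obtain ⟨ha_re, ha_imI⟩ := rot_fixed (C := Real.cos θ * Real.cos θ - Real.sin θ * Real.sin θ)
    (S := Real.sin θ * Real.cos θ + Real.cos θ * Real.sin θ) (p := a.re) (q := a.imI)
    (by linear_combination (Real.cos θ^2 + Real.sin θ^2 + 1) * pyth1) h2θ (by linear_combination ra) (by linear_combination ia)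
  -- the (0,1) entry: eI θ * b * eI φ = b forces b = 0
  have rb := congrArg QuaternionAlgebra.re e01
  have ib := congrArg QuaternionAlgebra.imI e01
  have jb := congrArg QuaternionAlgebra.imJ e01
  have kb := congrArg QuaternionAlgebra.imK e01
  simp [Quaternion.re_mul, Quaternion.imI_mul, Quaternion.imJ_mul, Quaternion.imK_mul]
    at rb ib jb kb
  set b := g 0 1
  obtain ⟨hb_re, hb_imI⟩ := rot_fixed
    (C := Real.cos θ * Real.cos φ - Real.sin θ * Real.sin φ)
    (S := Real.sin θ * Real.cos φ + Real.cos θ * Real.sin φ) (p := b.re) (q := b.imI)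
    (by linear_combination (Real.cos φ^2 + Real.sin φ^2) * pyth1 + pyth2) hCsum (by linear_combination rb) (by linear_combination ib)
  obtain ⟨hb_imJ, hb_imK⟩ := rot_fixed
    (C := Real.cos θ * Real.cos φ + Real.sin θ * Real.sin φ)
    (S := Real.sin θ * Real.cos φ - Real.cos θ * Real.sin φ) (p := b.imJ) (q := b.imK)
    (by linear_combination (Real.cos φ^2 + Real.sin φ^2) * pyth1 + pyth2) hCdiff (by linear_combination jb) (by linear_combination kb)
  have hb0 : b = 0 := by
    ext <;> simp [hb_re, hb_imI, hb_imJ, hb_imK, Quaternion.re_zero, Quaternion.imI_zero, Quaternion.imJ_zero, Quaternion.imK_zero]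
  -- now g*g = 1 at entry (0,0): a*a + b * (g 1 0) = 1
  have f00 := congrFun (congrFun hgg 0) 0
  simp only [Matrix.mul_apply, Fin.sum_univ_two, Matrix.one_apply_eq] at f00
  have haa : a * a = 1 := by
    rw [show g 0 1 = b from rfl, hb0, zero_mul, add_zero] at f00
    exact f00
  have := congrArg QuaternionAlgebra.re haa
  simp [Quaternion.re_mul, ha_re, ha_imI, Quaternion.re_one] at this
  nlinarith [sq_nonneg a.imJ, sq_nonneg a.imK, this]
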